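/- Let (γ, T, N, B, κ, τ) be a framed curve in ℝ³ parametrized by arclength, defined on an interval containing 0, whose torsion is a nonzero constant τ. Then γ'(s) = (1/τ)·(B(s) × B'(s)) for all s, and consequently γ(s) = γ(0) + (1/τ)·∫₀ˢ B(σ) × B'(σ) dσ, where × denotes the cross product in ℝ³. -/

import Mathlib

open scoped RealInnerProductSpace

/-- The cross product of two vectors in Euclidean 3-space. -/
noncomputable def cross3 (u v : EuclideanSpace ℝ (Fin 3)) : EuclideanSpace ℝ (Fin 3) :=
  WithLp.toLp 2 ![u 1 * v 2 - u 2 * v 1, u 2 * v 0 - u 0 * v 2, u 0 * v 1 - u 1 * v 0]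

/-- A framed curve in ℝ³, parametrized by arclength, on the parameter set `I`:
the maps `T`, `N`, `B` form a positively oriented orthonormal frame at each `s ∈ I`,
`κ` and `τ` are continuous on `I`, and the Frenet equations
`γ' = T`, `T' = κ·N`, `N' = −κ·T + τ·B`, `B' = −τ·N` hold on `I`. -/
structure FramedCurveOn (γ T N B : ℝ → EuclideanSpace ℝ (Fin 3)) (κ τ : ℝ → ℝ)
    (I : Set ℝ) : Prop where
  contκ : ContinuousOn κ I
  contτ : ContinuousOn τ I
  unitT : ∀ s ∈ I, ‖T s‖ = 1
  unitN : ∀ s ∈ I, ‖N s‖ = 1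
  unitB : ∀ s ∈ I, ‖B s‖ = 1
  orthoTN : ∀ s ∈ I, ⟪T s, N s⟫ = (0 : ℝ)
  orthoTB : ∀ s ∈ I, ⟪T s, B s⟫ = (0 : ℝ)
  orthoNB : ∀ s ∈ I, ⟪N s, B s⟫ = (0 : ℝ)
  oriented : ∀ s ∈ I, B s = cross3 (T s) (N s)
  derivγ : ∀ s ∈ I, HasDerivWithinAt γ (T s) I s
  derivT : ∀ s ∈ I, HasDerivWithinAt T (κ s • N s) I s
  derivN : ∀ s ∈ I, HasDerivWithinAt N ((-κ s) • T s + τ s • B s) I s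
  derivB : ∀ s ∈ I, HasDerivWithinAt B ((-τ s) • N s) I s

/-- A closed framed curve in ℝ³ of period `L`: a framed curve defined on all of ℝ,
all of whose data is `L`-periodic. -/
structure ClosedFramedCurve (γ T N B : ℝ → EuclideanSpace ℝ (Fin 3)) (κ τ : ℝ → ℝ)
    (L : ℝ) : Prop where
  framed : FramedCurveOn γ T N B κ τ Set.univ
  periodicγ : Function.Periodic γ L
  periodicT : Function.Periodic T L
  periodicN : Function.Periodic N L
  periodicB : Function.Periodic B L
  periodicκ : Function.Periodic κ L
  periodicτ : Function.Periodic τ L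

lemma cross3_smul_right (u v : EuclideanSpace ℝ (Fin 3)) (c : ℝ) :
    cross3 u (c • v) = c • cross3 u v := by
  ext i
  fin_cases i <;>
    simp [cross3, PiLp.smul_apply] <;> ring

lemma cross3_triple (T N : EuclideanSpace ℝ (Fin 3)) (hN : ⟪N, N⟫ = (1 : ℝ))
    (hTN : ⟪T, N⟫ = (0 : ℝ)) : cross3 (cross3 T N) N = -T := by
  have h1 : N 0 * N 0 + N 1 * N 1 + N 2 * N 2 = 1 := by
    simp only [PiLp.inner_apply, Fin.sum_univ_three, RCLike.inner_apply, conj_trivial] at hN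
    linear_combination hN
  have h2 : T 0 * N 0 + T 1 * N 1 + T 2 * N 2 = 0 := by
    simp [PiLp.inner_apply, Fin.sum_univ_three] at hTN
    linear_combination hTN
  ext i
  fin_cases i
  all_goals simp [cross3]
  · linear_combination (-(T 0)) * h1 + (N 0) * h2
  · linear_combination (-(T 1)) * h1 + (N 1) * h2
  · linear_combination (-(T 2)) * h1 + (N 2) * h2

/-- Koenigs/Darboux integral representation: for a framed curve of nonzero constant
torsion `τ₀` on an (open) interval containing `0`, one has `γ' = (1/τ₀)·(B × B')` and
hence `γ(s) = γ(0) + (1/τ₀)·∫₀ˢ B × B'`. -/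
theorem darboux_representation (γ T N B : ℝ → EuclideanSpace ℝ (Fin 3))
    (κ τ : ℝ → ℝ) (I : Set ℝ) (hIopen : IsOpen I) (hIint : I.OrdConnected)
    (h0 : (0 : ℝ) ∈ I) (h : FramedCurveOn γ T N B κ τ I)
    (τ₀ : ℝ) (hτ₀ : τ₀ ≠ 0) (hτ : ∀ s ∈ I, τ s = τ₀) :
    (∀ s ∈ I, deriv γ s = (1 / τ₀) • cross3 (B s) (deriv B s)) ∧
      (∀ s ∈ I, γ s = γ 0 + (1 / τ₀) • ∫ σ in (0 : ℝ)..s, cross3 (B σ) (deriv B σ)) := by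
  have hT' : ∀ s ∈ I, HasDerivAt γ (T s) s := fun s hs =>
    (h.derivγ s hs).hasDerivAt (hIopen.mem_nhds hs)
  have hB' : ∀ s ∈ I, HasDerivAt B ((-τ₀) • N s) s := fun s hs => by
    have := (h.derivB s hs).hasDerivAt (hIopen.mem_nhds hs)
    rwa [hτ s hs] at this
  have hderivB : ∀ s ∈ I, deriv B s = (-τ₀) • N s := fun s hs => (hB' s hs).deriv
  have hkey : ∀ s ∈ I, (1 / τ₀) • cross3 (B s) (deriv B s) = T s := by
    intro s hs
    have hNN : ⟪N s, N s⟫ = (1 : ℝ) := by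
      have := h.unitN s hs
      rw [real_inner_self_eq_norm_sq, this]; norm_num
    rw [hderivB s hs, cross3_smul_right, h.oriented s hs,
      cross3_triple (T s) (N s) hNN (h.orthoTN s hs), smul_smul, smul_neg, ← neg_smul]
    rw [show -(1 / τ₀ * -τ₀) = (1 : ℝ) by field_simp, one_smul]
  constructor
  · intro s hs
    rw [(hT' s hs).deriv, ← hkey s hs]
  · intro s hs
    have hsub : Set.uIcc 0 s ⊆ I := hIint.uIcc_subset h0 hs
    have hcontT : ContinuousOn T (Set.uIcc 0 s) := fun σ hσ =>
      ((h.derivT σ (hsub hσ)).hasDerivAt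
        (hIopen.mem_nhds (hsub hσ))).continuousAt.continuousWithinAt
    have hcont : ContinuousOn (fun σ => (1 / τ₀) • cross3 (B σ) (deriv B σ))
        (Set.uIcc 0 s) := hcontT.congr fun σ hσ => hkey σ (hsub hσ)
    have hint := intervalIntegral.integral_eq_sub_of_hasDerivAt
      (f := γ) (f' := fun σ => (1 / τ₀) • cross3 (B σ) (deriv B σ)) (a := 0) (b := s)
      (fun σ hσ => by
        show HasDerivAt γ ((1 / τ₀) • cross3 (B σ) (deriv B σ)) σ
        rw [hkey σ (hsub hσ)]; exact hT' σ (hsub hσ))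
      (hcont.intervalIntegrable)
    rw [intervalIntegral.integral_smul] at hint
    exact sub_eq_iff_eq_add'.mp hint.symm
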